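/- arXiv:2502.04006 — 5 statements merged into one kernel-verified Lean document; each statement's English description precedes it below -/
import Mathlib

section
/- Let n ≥ 2 and let X be a linear subspace of ℝⁿ. Then S₊(X) ∩ {A ∈ Sⁿ : ⟨A, Jₙ⟩ ≥ 0} = CP(X ∩ Lⁿ), and S₊(X) ∩ {A ∈ Sⁿ : ⟨A, Jₙ⟩ = 0} = CP(X ∩ ∂Lⁿ). -/
open Matrix
open scoped Pointwise

noncomputable section

/-- Frobenius inner product on real `n × n` matrices:
`⟨A,B⟩ = ∑ᵢⱼ Aᵢⱼ Bᵢⱼ`. -/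
def mip {n : ℕ} (A B : Matrix (Fin n) (Fin n) ℝ) : ℝ :=
  ∑ i, ∑ j, A i j * B i j

/-- `CPset S` (also used for `S₊(X)` when `S` is a subspace): the set of matrices of the
form `∑ᵢ aᵢaᵢᵀ` for a positive number of vectors `aᵢ ∈ S`. -/
def CPset {n : ℕ} (S : Set (Fin n → ℝ)) : Set (Matrix (Fin n) (Fin n) ℝ) :=
  {A | ∃ k : ℕ, 0 < k ∧ ∃ f : Fin k → (Fin n → ℝ),
        (∀ i, f i ∈ S) ∧ A = ∑ i, Matrix.vecMulVec (f i) (f i)}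

/-- `COPset K`: symmetric matrices `A` with `xᵀAx ≥ 0` for all `x ∈ K`. -/
def COPset {n : ℕ} (K : Set (Fin n → ℝ)) : Set (Matrix (Fin n) (Fin n) ℝ) :=
  {A | A.IsSymm ∧ ∀ x ∈ K, 0 ≤ x ⬝ᵥ A.mulVec x}

/-- `F` is a face of the convex cone `C`: a nonempty convex subcone such that
`a, b ∈ C`, `a + b ∈ F` imply `a, b ∈ F`. -/
def IsFaceOf {M : Type*} [AddCommMonoid M] [Module ℝ M] (C F : Set M) : Prop :=
  F.Nonempty ∧ F ⊆ C ∧ Convex ℝ F ∧ (∀ x ∈ F, ∀ c : ℝ, 0 ≤ c → c • x ∈ F) ∧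
    ∀ a ∈ C, ∀ b ∈ C, a + b ∈ F → a ∈ F ∧ b ∈ F

/-- Exposed face of a cone of matrices (w.r.t. the trace inner product). -/
def IsExposedFaceOf {n : ℕ} (C F : Set (Matrix (Fin n) (Fin n) ℝ)) : Prop :=
  IsFaceOf C F ∧ ∃ H : Matrix (Fin n) (Fin n) ℝ,
    (∀ A ∈ C, 0 ≤ mip H A) ∧ F = {A ∈ C | mip H A = 0}

/-- Dimension of a set: dimension of its linear span. -/
def setDim {M : Type*} [AddCommGroup M] [Module ℝ M] (S : Set M) : ℕ :=
  Module.finrank ℝ (Submodule.span ℝ S)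

/-- The ray `ℝ₊ • x`. -/
def rayOf {M : Type*} [AddCommMonoid M] [Module ℝ M] (x : M) : Set M :=
  {y | ∃ c : ℝ, 0 ≤ c ∧ y = c • x}

/-- An extreme ray: a one-dimensional face. -/
def IsExtremeRayOf {M : Type*} [AddCommGroup M] [Module ℝ M] (C F : Set M) : Prop :=
  IsFaceOf C F ∧ setDim F = 1

/-- The second-order cone `L^{m+1} = {x : x₀ ≥ ‖(x₁,…,xₘ)‖}`. -/
def soc (m : ℕ) : Set (Fin (m+1) → ℝ) :=
  {x | Real.sqrt (∑ i : Fin m, x i.succ ^ 2) ≤ x 0}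

/-- The boundary `∂L^{m+1} = {x : x₀ = ‖(x₁,…,xₘ)‖}`. -/
def socBd (m : ℕ) : Set (Fin (m+1) → ℝ) :=
  {x | Real.sqrt (∑ i : Fin m, x i.succ ^ 2) = x 0}

/-- The interior `int L^{m+1} = {x : x₀ > ‖(x₁,…,xₘ)‖}`. -/
def socInt (m : ℕ) : Set (Fin (m+1) → ℝ) :=
  {x | Real.sqrt (∑ i : Fin m, x i.succ ^ 2) < x 0}

/-- The matrix `J = diag(1, −1, …, −1)`. -/
def Jmat (m : ℕ) : Matrix (Fin (m+1)) (Fin (m+1)) ℝ :=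
  Matrix.diagonal fun i => if i = 0 then 1 else -1

/-- The hyperplane `{x : x ⬝ u = 0}` as a submodule. -/
def perpHyp {n : ℕ} (u : Fin n → ℝ) : Submodule ℝ (Fin n → ℝ) where
  carrier := {x | x ⬝ᵥ u = 0}
  add_mem' := by
    intro a b ha hb
    simp only [Set.mem_setOf_eq, add_dotProduct] at *
    linarith
  zero_mem' := by simp [zero_dotProduct]
  smul_mem' := by
    intro c a ha
    simp only [Set.mem_setOf_eq, smul_dotProduct] at *
    simp [ha]

/-- A polyhedral cone: nonnegative combinations of finitely many vectors. -/
def IsPolyhedralCone {M : Type*} [AddCommMonoid M] [Module ℝ M] (S : Set M) : Prop :=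
  ∃ (k : ℕ) (g : Fin k → M),
    S = {x | ∃ c : Fin k → ℝ, (∀ i, 0 ≤ c i) ∧ x = ∑ i, c i • g i}

end

section Stmt10Aux
open scoped Classical

noncomputable def qf' {m : ℕ} (a : Fin (m+1) → ℝ) : ℝ := a 0 ^ 2 - ∑ i : Fin m, a i.succ ^ 2

lemma mip_outer' (m : ℕ) (a : Fin (m+1) → ℝ) :
    mip (Matrix.vecMulVec a a) (Jmat m) = qf' a := by
  unfold mip Jmat qf'
  simp [Matrix.diagonal, Matrix.vecMulVec, Finset.mul_sum, mul_ite]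
  rw [Fin.sum_univ_succ]
  simp only [Fin.succ_ne_zero, if_neg, if_pos, sq]
  simp [Fin.succ_ne_zero, sub_eq_add_neg]

lemma mip_add_left' {n : ℕ} (A B C : Matrix (Fin n) (Fin n) ℝ) :
    mip (A + B) C = mip A C + mip B C := by
  unfold mip
  simp [add_mul, Finset.sum_add_distrib]

lemma mip_list_sum' {n : ℕ} (l : List (Matrix (Fin n) (Fin n) ℝ)) (C : Matrix (Fin n) (Fin n) ℝ) :
    mip l.sum C = (l.map (mip · C)).sum := by
  induction l with
  | nil => simp [mip]
  | cons a t ih => simp [mip_add_left', ih]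

lemma sum_sq_nonneg' {m : ℕ} (a : Fin (m+1) → ℝ) : (0:ℝ) ≤ ∑ i : Fin m, a i.succ ^ 2 :=
  Finset.sum_nonneg fun _ _ => sq_nonneg _

lemma mem_soc_iff' {m : ℕ} (a : Fin (m+1) → ℝ) : a ∈ soc m ↔ 0 ≤ a 0 ∧ 0 ≤ qf' a := by
  unfold soc qf'
  simp only [Set.mem_setOf_eq]
  constructor
  · intro h
    have h0 : 0 ≤ a 0 := le_trans (Real.sqrt_nonneg _) h
    refine ⟨h0, ?_⟩
    have := Real.sq_sqrt (sum_sq_nonneg' a)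
    nlinarith [Real.sqrt_nonneg (∑ i : Fin m, a i.succ ^ 2)]
  · rintro ⟨h0, hq⟩
    have h1 : ∑ i : Fin m, a i.succ ^ 2 ≤ a 0 ^ 2 := by linarith
    calc Real.sqrt (∑ i : Fin m, a i.succ ^ 2) ≤ Real.sqrt (a 0 ^ 2) := Real.sqrt_le_sqrt h1
    _ = a 0 := by rw [Real.sqrt_sq h0]

lemma mem_socBd_iff' {m : ℕ} (a : Fin (m+1) → ℝ) : a ∈ socBd m ↔ 0 ≤ a 0 ∧ qf' a = 0 := by
  unfold socBd qf'
  simp only [Set.mem_setOf_eq]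
  constructor
  · intro h
    have h0 : 0 ≤ a 0 := h ▸ Real.sqrt_nonneg _
    have := Real.sq_sqrt (sum_sq_nonneg' a)
    refine ⟨h0, ?_⟩
    rw [← h, this]; ring
  · rintro ⟨h0, hq⟩
    have h1 : ∑ i : Fin m, a i.succ ^ 2 = a 0 ^ 2 := by linarith
    rw [h1, Real.sqrt_sq h0]

lemma qf'_neg {m : ℕ} (a : Fin (m+1) → ℝ) : qf' (-a) = qf' a := by simp [qf']

lemma outer_neg' {m : ℕ} (a : Fin (m+1) → ℝ) :
    Matrix.vecMulVec (-a) (-a) = Matrix.vecMulVec a a := by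
  ext i j; simp [Matrix.vecMulVec]

lemma qf'_cont {m : ℕ} (a b : Fin (m+1) → ℝ) :
    Continuous (fun θ : ℝ => qf' (Real.cos θ • a + Real.sin θ • b)) := by
  unfold qf'
  simp only [Pi.add_apply, Pi.smul_apply, smul_eq_mul]
  fun_prop

lemma rotate' {m : ℕ} (a b : Fin (m+1) → ℝ) (ha : qf' a < 0) (hb : 0 < qf' b) :
    ∃ c d : Fin (m+1) → ℝ, qf' c = 0 ∧
      Matrix.vecMulVec c c + Matrix.vecMulVec d d
        = Matrix.vecMulVec a a + Matrix.vecMulVec b b ∧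
      (∀ X : Submodule ℝ (Fin (m+1) → ℝ), a ∈ X → b ∈ X → c ∈ X ∧ d ∈ X) := by
  set g : ℝ → ℝ := fun θ : ℝ => qf' (Real.cos θ • a + Real.sin θ • b) with hg
  have hg0 : g 0 = qf' a := by simp [hg]
  have hg1 : g (Real.pi/2) = qf' b := by simp [hg]
  have hsub : Set.Icc (g 0) (g (Real.pi/2)) ⊆ g '' Set.Icc 0 (Real.pi/2) :=
    intermediate_value_Icc (by positivity) (qf'_cont a b).continuousOn
  have h0mem : (0:ℝ) ∈ Set.Icc (g 0) (g (Real.pi/2)) := by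
    rw [hg0, hg1]; exact ⟨ha.le, hb.le⟩
  obtain ⟨θ, -, hθ⟩ := hsub h0mem
  refine ⟨Real.cos θ • a + Real.sin θ • b, (-Real.sin θ) • a + Real.cos θ • b, hθ, ?_, ?_⟩
  · ext i j
    simp only [Matrix.vecMulVec_apply, Matrix.add_apply, Pi.add_apply, Pi.smul_apply,
      smul_eq_mul]
    linear_combination (a i * a j + b i * b j) * Real.sin_sq_add_cos_sq θ
  · intro X hax hbx
    exact ⟨X.add_mem (X.smul_mem _ hax) (X.smul_mem _ hbx),
      X.add_mem (X.smul_mem _ hax) (X.smul_mem _ hbx)⟩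

lemma qf'_rotate_sum {m : ℕ} {a b c d : Fin (m+1) → ℝ}
    (h : Matrix.vecMulVec c c + Matrix.vecMulVec d d
        = Matrix.vecMulVec a a + Matrix.vecMulVec b b) :
    qf' c + qf' d = qf' a + qf' b := by
  have := congrArg (fun M => mip M (Jmat m)) h
  simpa [mip_add_left', mip_outer'] using this

lemma list_sum_nonpos' (l : List ℝ) (h : ∀ x ∈ l, x ≤ 0) : l.sum ≤ 0 := by
  induction l with
  | nil => simp
  | cons a t ih =>
    simp only [List.sum_cons]
    have := h a List.mem_cons_self
    have := ih (fun x hx => h x (List.mem_cons_of_mem a hx))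
    linarith

lemma core' {m : ℕ} (X : Submodule ℝ (Fin (m+1) → ℝ)) :
    ∀ (N : ℕ) (l : List (Fin (m+1) → ℝ)),
      l.countP (fun a => decide (qf' a ≠ 0)) = N →
      (∀ a ∈ l, a ∈ X) → 0 ≤ (l.map qf').sum →
      ∃ l' : List (Fin (m+1) → ℝ), l'.length = l.length ∧
        (∀ a ∈ l', a ∈ X ∧ 0 ≤ qf' a) ∧
        (l'.map qf').sum = (l.map qf').sum ∧
        (l'.map (fun a => Matrix.vecMulVec a a)).sum
          = (l.map (fun a => Matrix.vecMulVec a a)).sum := by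
  intro N
  induction N using Nat.strong_induction_on with
  | _ N ih =>
    intro l hN hX hsum
    by_cases hneg : ∃ a ∈ l, qf' a < 0
    · obtain ⟨a, hal, ha⟩ := hneg
      have pa : l.Perm (a :: l.erase a) := List.perm_cons_erase hal
      have hsum' : (l.map qf').sum = qf' a + ((l.erase a).map qf').sum := by
        rw [(pa.map qf').sum_eq]; simp
      have hbex : ∃ b ∈ l.erase a, 0 < qf' b := by
        by_contra hc
        push_neg at hc
        have := list_sum_nonpos' ((l.erase a).map qf') (by
          intro x hx
          obtain ⟨b, hb, rfl⟩ := List.mem_map.mp hx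
          exact hc b hb)
        linarith
      obtain ⟨b, hbl, hb⟩ := hbex
      have pb : (l.erase a).Perm (b :: (l.erase a).erase b) := List.perm_cons_erase hbl
      set rest := (l.erase a).erase b with hrest
      have p : l.Perm (a :: b :: rest) := pa.trans (pb.cons a)
      obtain ⟨c, d, hc0, houter, hmem⟩ := rotate' a b ha hb
      have hqcd : qf' c + qf' d = qf' a + qf' b := qf'_rotate_sum houter
      set L : List (Fin (m+1) → ℝ) := c :: d :: rest with hL
      have hcount : L.countP (fun a => decide (qf' a ≠ 0)) < N := by
        rw [← hN, p.countP_eq (fun a => decide (qf' a ≠ 0))]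
        simp only [hL, List.countP_cons, hc0, ha.ne, hb.ne']
        by_cases hd : qf' d = 0 <;> simp [hd, ha.ne, hb.ne'] <;> omega
      have hXL : ∀ x ∈ L, x ∈ X := by
        have hrestX : ∀ x ∈ rest, x ∈ X := fun x hx =>
          hX x (List.mem_of_mem_erase (List.mem_of_mem_erase hx))
        obtain ⟨hcX, hdX⟩ := hmem X (hX a hal) (hX b (List.mem_of_mem_erase hbl))
        intro x hx
        simp only [hL, List.mem_cons] at hx
        rcases hx with rfl | rfl | hx
        · exact hcX
        · exact hdX
        · exact hrestX _ hx
      have hqL : (L.map qf').sum = (l.map qf').sum := by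
        rw [(p.map qf').sum_eq]
        simp only [hL, List.map_cons, List.sum_cons]
        linarith
      have houtL : (L.map (fun a => Matrix.vecMulVec a a)).sum
          = (l.map (fun a => Matrix.vecMulVec a a)).sum := by
        rw [(p.map (fun a => Matrix.vecMulVec a a)).sum_eq]
        simp only [hL, List.map_cons, List.sum_cons, ← add_assoc, houter]
      have hlenL : L.length = l.length := by
        rw [p.length_eq]; simp [hL]
      obtain ⟨l', h1, h2, h3, h4⟩ := ih _ hcount L rfl hXL (hqL ▸ hsum)
      exact ⟨l', by rw [h1, hlenL], h2, by rw [h3, hqL], by rw [h4, houtL]⟩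
    · push_neg at hneg
      exact ⟨l, rfl, fun x hx => ⟨hX x hx, hneg x hx⟩, rfl, rfl⟩

/-- Sign-flip step. -/
lemma flip' {m : ℕ} (X : Submodule ℝ (Fin (m+1) → ℝ)) (l : List (Fin (m+1) → ℝ))
    (h : ∀ a ∈ l, a ∈ X ∧ 0 ≤ qf' a) :
    ∃ l' : List (Fin (m+1) → ℝ), l'.length = l.length ∧
      (∀ a ∈ l', a ∈ X ∧ 0 ≤ qf' a ∧ 0 ≤ a 0) ∧
      (l'.map qf').sum = (l.map qf').sum ∧
      (l'.map (fun a => Matrix.vecMulVec a a)).sum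
        = (l.map (fun a => Matrix.vecMulVec a a)).sum := by
  set φ : (Fin (m+1) → ℝ) → (Fin (m+1) → ℝ) := fun a => if a 0 < 0 then -a else a with hφ
  have hqφ : ∀ a, qf' (φ a) = qf' a := by
    intro a; by_cases h0 : a 0 < 0 <;> simp [hφ, h0, qf'_neg]
  have hoφ : ∀ a, Matrix.vecMulVec (φ a) (φ a) = Matrix.vecMulVec a a := by
    intro a; by_cases h0 : a 0 < 0 <;> simp [hφ, h0, outer_neg']
  refine ⟨l.map φ, by simp, ?_, ?_, ?_⟩
  · intro x hx
    obtain ⟨a, hal, rfl⟩ := List.mem_map.mp hx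
    obtain ⟨haX, haq⟩ := h a hal
    refine ⟨?_, by rw [hqφ]; exact haq, ?_⟩
    · rcases lt_or_ge (a 0) 0 with h0 | h0
      · simp only [hφ, if_pos h0]; exact X.neg_mem haX
      · simp only [hφ, if_neg (not_lt.mpr h0)]; exact haX
    · rcases lt_or_ge (a 0) 0 with h0 | h0
      · simp only [hφ, if_pos h0, Pi.neg_apply]; linarith
      · simp only [hφ, if_neg (not_lt.mpr h0)]; exact h0
  · rw [List.map_map]
    congr 1
    exact List.map_congr_left (fun a _ => hqφ a)
  · rw [List.map_map]
    congr 1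
    exact List.map_congr_left (fun a _ => hoφ a)

lemma list_mem_CPset' {n : ℕ} (S : Set (Fin n → ℝ)) (l : List (Fin n → ℝ))
    (hl : 0 < l.length) (h : ∀ a ∈ l, a ∈ S) :
    (l.map (fun a => Matrix.vecMulVec a a)).sum ∈ CPset S := by
  refine ⟨l.length, hl, l.get, fun i => h _ (List.get_mem l i), ?_⟩
  conv_lhs => rw [← List.ofFn_get l]
  rw [List.map_ofFn, List.sum_ofFn]
  rfl

lemma CPset_mem_list' {n : ℕ} (S : Set (Fin n → ℝ)) (A : Matrix (Fin n) (Fin n) ℝ)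
    (hA : A ∈ CPset S) :
    ∃ l : List (Fin n → ℝ), 0 < l.length ∧ (∀ a ∈ l, a ∈ S) ∧
      A = (l.map (fun a => Matrix.vecMulVec a a)).sum := by
  obtain ⟨k, hk, f, hf, rfl⟩ := hA
  refine ⟨List.ofFn f, by simpa, ?_, ?_⟩
  · intro a ha
    rw [List.mem_ofFn] at ha
    obtain ⟨i, rfl⟩ := ha
    exact hf i
  · rw [List.map_ofFn, List.sum_ofFn]
    rfl

lemma mip_list' {m : ℕ} (l : List (Fin (m+1) → ℝ)) :
    mip (l.map (fun a => Matrix.vecMulVec a a)).sum (Jmat m) = (l.map qf').sum := by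
  rw [mip_list_sum', List.map_map]
  congr 1
  exact List.map_congr_left (fun a _ => mip_outer' m a)

end Stmt10Aux

/-- `S₊(X) ∩ {⟨A,Jₙ⟩ ≥ 0} = CP(X ∩ Lⁿ)` and
`S₊(X) ∩ {⟨A,Jₙ⟩ = 0} = CP(X ∩ ∂Lⁿ)` (here `n = m + 1 ≥ 2`). -/
theorem stmt10 (m : ℕ) (hm : 1 ≤ m) (X : Submodule ℝ (Fin (m+1) → ℝ)) :
    CPset (X : Set (Fin (m+1) → ℝ)) ∩
        {A : Matrix (Fin (m+1)) (Fin (m+1)) ℝ | 0 ≤ mip A (Jmat m)} =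
      CPset ((X : Set (Fin (m+1) → ℝ)) ∩ soc m) ∧
    CPset (X : Set (Fin (m+1) → ℝ)) ∩
        {A : Matrix (Fin (m+1)) (Fin (m+1)) ℝ | mip A (Jmat m) = 0} =
      CPset ((X : Set (Fin (m+1) → ℝ)) ∩ socBd m) := by
  constructor
  · ext A
    constructor
    · rintro ⟨hA, hJ⟩
      obtain ⟨l, hlen, hXl, rfl⟩ := CPset_mem_list' _ A hA
      have hsum : 0 ≤ (l.map qf').sum := by
        rw [← mip_list']; exact hJ
      obtain ⟨l₂, hlen₂, h₂, hq₂, ho₂⟩ := core' X _ l rfl hXl hsum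
      obtain ⟨l₃, hlen₃, h₃, hq₃, ho₃⟩ := flip' X l₂ h₂
      rw [← ho₂, ← ho₃]
      refine list_mem_CPset' _ l₃ (by omega) ?_
      intro a ha
      obtain ⟨haX, haq, ha0⟩ := h₃ a ha
      exact ⟨haX, (mem_soc_iff' a).mpr ⟨ha0, haq⟩⟩
    · intro hA
      obtain ⟨l, hlen, hXl, rfl⟩ := CPset_mem_list' _ A hA
      refine ⟨list_mem_CPset' _ l hlen (fun a ha => (hXl a ha).1), ?_⟩
      show (0:ℝ) ≤ mip _ (Jmat m)
      rw [mip_list']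
      refine List.sum_nonneg ?_
      intro x hx
      obtain ⟨a, ha, rfl⟩ := List.mem_map.mp hx
      exact ((mem_soc_iff' a).mp (hXl a ha).2).2
  · ext A
    constructor
    · rintro ⟨hA, hJ⟩
      obtain ⟨l, hlen, hXl, rfl⟩ := CPset_mem_list' _ A hA
      have hJ' : (l.map qf').sum = 0 := by
        rw [← mip_list']; exact hJ
      obtain ⟨l₂, hlen₂, h₂, hq₂, ho₂⟩ := core' X _ l rfl hXl (by rw [hJ'])
      obtain ⟨l₃, hlen₃, h₃, hq₃, ho₃⟩ := flip' X l₂ h₂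
      have hsum3 : (l₃.map qf').sum = 0 := by rw [hq₃, hq₂, hJ']
      rw [← ho₂, ← ho₃]
      refine list_mem_CPset' _ l₃ (by omega) ?_
      intro a ha
      obtain ⟨haX, haq, ha0⟩ := h₃ a ha
      have hle : qf' a ≤ (l₃.map qf').sum := by
        refine List.single_le_sum ?_ _ (List.mem_map_of_mem (f := qf') ha)
        intro x hx
        obtain ⟨b, hb, rfl⟩ := List.mem_map.mp hx
        exact (h₃ b hb).2.1
      refine ⟨haX, (mem_socBd_iff' a).mpr ⟨ha0, le_antisymm (by rw [hsum3] at hle; exact hle) haq⟩⟩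
    · intro hA
      obtain ⟨l, hlen, hXl, rfl⟩ := CPset_mem_list' _ A hA
      refine ⟨list_mem_CPset' _ l hlen (fun a ha => (hXl a ha).1), ?_⟩
      show mip _ (Jmat m) = 0
      rw [mip_list']
      refine List.sum_eq_zero ?_
      intro x hx
      obtain ⟨a, ha, rfl⟩ := List.mem_map.mp hx
      exact ((mem_socBd_iff' a).mp (hXl a ha).2).2
end

section
/- Let n ≥ 2 and let X be a d-dimensional linear subspace of ℝⁿ with X ∩ int Lⁿ ≠ ∅. Then the dimension of the cone CP(X ∩ Lⁿ) (i.e., the dimension of its linear span in Sⁿ) equals T_d = d(d+1)/2. -/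
open Matrix
open scoped Pointwise

noncomputable section Aux
lemma span_CPset {n : ℕ} (S : Set (Fin n → ℝ)) :
    Submodule.span ℝ (CPset S) =
      Submodule.span ℝ {A | ∃ a ∈ S, A = Matrix.vecMulVec a a} := by
  apply le_antisymm <;> rw [Submodule.span_le]
  · rintro A ⟨k, hk, f, hf, rfl⟩
    exact Submodule.sum_mem _ fun i _ => Submodule.subset_span ⟨f i, hf i, rfl⟩
  · rintro A ⟨a, ha, rfl⟩
    exact Submodule.subset_span ⟨1, one_pos, fun _ => a, fun _ => ha, by simp⟩

lemma isOpen_socInt (m : ℕ) : IsOpen (socInt m) := by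
  apply isOpen_lt
  · exact (continuous_finset_sum _ fun i _ => ((continuous_apply _).pow 2 :
        Continuous fun x : Fin (m+1) → ℝ => x i.succ ^ 2)).sqrt
  · exact continuous_apply 0

lemma exists_t (m : ℕ) (e a : Fin (m+1) → ℝ) (he : e ∈ socInt m) :
    ∃ t : ℝ, 0 < t ∧ e + t • a ∈ socInt m ∧ e - t • a ∈ socInt m := by
  have h1 : Continuous fun t : ℝ => e + t • a := by fun_prop
  have h2 : Continuous fun t : ℝ => e - t • a := by fun_prop
  have hO : IsOpen ((fun t : ℝ => e + t • a) ⁻¹' socInt m ∩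
      (fun t : ℝ => e - t • a) ⁻¹' socInt m) :=
    ((isOpen_socInt m).preimage h1).inter ((isOpen_socInt m).preimage h2)
  have h0 : (0:ℝ) ∈ (fun t : ℝ => e + t • a) ⁻¹' socInt m ∩
      (fun t : ℝ => e - t • a) ⁻¹' socInt m := by
    constructor <;> · show _ ∈ socInt m; simpa using he
  obtain ⟨ε, hε, hsub⟩ := Metric.isOpen_iff.mp hO 0 h0
  have hb : (ε/2 : ℝ) ∈ Metric.ball (0:ℝ) ε := by
    simp only [Metric.mem_ball, Real.dist_eq, sub_zero,
      abs_of_pos (by linarith : (0:ℝ) < ε/2)]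
    linarith
  exact ⟨ε/2, by linarith, (hsub hb).1, (hsub hb).2⟩

lemma vmv_identity {n : ℕ} (e a : Fin n → ℝ) (t : ℝ) (ht : t ≠ 0) :
    vecMulVec a a = (1/(2*t^2)) • (vecMulVec (e + t • a) (e + t • a)
      + vecMulVec (e - t • a) (e - t • a)) - (1/t^2) • vecMulVec e e := by
  ext k l
  simp only [Matrix.sub_apply, Matrix.smul_apply, Matrix.add_apply, vecMulVec_apply,
    Pi.add_apply, Pi.sub_apply, Pi.smul_apply, smul_eq_mul]
  field_simp
  ring

lemma span_trick (m : ℕ) (X : Submodule ℝ (Fin (m+1) → ℝ))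
    (hint : ((X : Set (Fin (m+1) → ℝ)) ∩ socInt m).Nonempty) :
    Submodule.span ℝ {A | ∃ a ∈ (X : Set (Fin (m+1) → ℝ)) ∩ soc m, A = vecMulVec a a} =
      Submodule.span ℝ {A | ∃ a ∈ (X : Set (Fin (m+1) → ℝ)), A = vecMulVec a a} := by
  obtain ⟨e, heX, heI⟩ := hint
  apply le_antisymm
  · exact Submodule.span_mono (by rintro A ⟨a, ⟨ha, _⟩, rfl⟩; exact ⟨a, ha, rfl⟩)
  · rw [Submodule.span_le]
    rintro A ⟨a, ha, rfl⟩
    obtain ⟨t, ht, h1, h2⟩ := exists_t m e a heI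
    have mem : ∀ x : Fin (m+1) → ℝ, x ∈ (X : Set (Fin (m+1) → ℝ)) → x ∈ socInt m →
        vecMulVec x x ∈ Submodule.span ℝ
          {A | ∃ a ∈ (X : Set (Fin (m+1) → ℝ)) ∩ soc m, A = vecMulVec a a} := by
      intro x hx hxi
      exact Submodule.subset_span ⟨x, ⟨hx, le_of_lt (a := Real.sqrt (∑ i : Fin m, x i.succ ^ 2)) hxi⟩, rfl⟩
    rw [vmv_identity e a t (ne_of_gt ht)]
    refine Submodule.sub_mem _ (Submodule.smul_mem _ _ (Submodule.add_mem _ ?_ ?_))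
      (Submodule.smul_mem _ _ (mem e heX heI))
    · exact mem _ (X.add_mem heX (X.smul_mem t ha)) h1
    · exact mem _ (X.sub_mem heX (X.smul_mem t ha)) h2


def symSub (d : ℕ) : Submodule ℝ (Matrix (Fin d) (Fin d) ℝ) where
  carrier := {A | Aᵀ = A}
  add_mem' := by intro a b ha hb; simp_all [Matrix.transpose_add]
  zero_mem' := by simp
  smul_mem' := by intro c a ha; simp_all [Matrix.transpose_smul]

noncomputable def symEquiv (d : ℕ) : symSub d ≃ₗ[ℝ] ({p : Fin d × Fin d // p.1 ≤ p.2} → ℝ) where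
  toFun S p := S.1 p.1.1 p.1.2
  map_add' a b := rfl
  map_smul' c a := rfl
  invFun f := ⟨Matrix.of fun i j => if h : i ≤ j then f ⟨(i,j), h⟩ else f ⟨(j,i), le_of_not_ge h⟩, by
    ext i j
    simp only [Matrix.transpose_apply, Matrix.of_apply]
    rcases le_total i j with h | h
    · rcases eq_or_lt_of_le h with rfl | hlt
      · simp
      · rw [dif_neg (not_le_of_gt hlt), dif_pos h]
    · rcases eq_or_lt_of_le h with rfl | hlt
      · simp
      · rw [dif_pos h, dif_neg (not_le_of_gt hlt)]⟩
  left_inv S := by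
    apply Subtype.ext
    ext i j
    simp only [Matrix.of_apply]
    split
    · rfl
    · conv_rhs => rw [← S.2]
      rfl
  right_inv f := by
    funext p
    obtain ⟨⟨i, j⟩, h⟩ := p
    simp [h]

lemma finrank_symSub (d : ℕ) : Module.finrank ℝ (symSub d) = d * (d + 1) / 2 := by
  rw [(symEquiv d).finrank_eq, Module.finrank_pi]
  rw [← Fintype.card_congr (Sym2.sortEquiv (α := Fin d))]
  rw [Sym2.card, Fintype.card_fin, Nat.choose_two_right]
  simp [Nat.mul_comm]

lemma span_vmv_eq_symSub (d : ℕ) :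
    Submodule.span ℝ {A : Matrix (Fin d) (Fin d) ℝ | ∃ v, A = vecMulVec v v} = symSub d := by
  apply le_antisymm
  · rw [Submodule.span_le]
    rintro A ⟨v, rfl⟩
    show (vecMulVec v v)ᵀ = vecMulVec v v
    ext i j
    simp [vecMulVec_apply, mul_comm]
  · intro S hS
    have hsym : Sᵀ = S := hS
    have key : ∀ i j : Fin d,
        vecMulVec (Pi.single i 1 + Pi.single j 1 : Fin d → ℝ) (Pi.single i 1 + Pi.single j 1)
          - vecMulVec (Pi.single i 1) (Pi.single i 1)
          - vecMulVec (Pi.single j 1) (Pi.single j 1) ∈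
          Submodule.span ℝ {A : Matrix (Fin d) (Fin d) ℝ | ∃ v, A = vecMulVec v v} :=
      fun i j => Submodule.sub_mem _ (Submodule.sub_mem _
        (Submodule.subset_span ⟨_, rfl⟩) (Submodule.subset_span ⟨_, rfl⟩))
        (Submodule.subset_span ⟨_, rfl⟩)
    have hrepr : S = ∑ i : Fin d, ∑ j : Fin d, (S i j / 2) •
        (vecMulVec (Pi.single i 1 + Pi.single j 1 : Fin d → ℝ) (Pi.single i 1 + Pi.single j 1)
          - vecMulVec (Pi.single i 1) (Pi.single i 1)
          - vecMulVec (Pi.single j 1) (Pi.single j 1)) := by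
      ext k l
      rw [Matrix.sum_apply]
      simp only [Matrix.sum_apply, Matrix.smul_apply, Matrix.sub_apply, vecMulVec_apply,
        Pi.add_apply, Pi.single_apply, smul_eq_mul]
      have hS' : S k l = S l k := congrFun (congrFun hsym l) k
      rw [Finset.sum_comm]
      have hsw : ∀ y x : Fin d, S x y / 2 *
          ((((if k = x then (1:ℝ) else 0) + if k = y then 1 else 0) *
            ((if l = x then 1 else 0) + if l = y then 1 else 0) -
              (if k = x then 1 else 0) * if l = x then 1 else 0) -
            (if k = y then 1 else 0) * if l = y then 1 else 0)
          = S x y / 2 * ((if k = x then 1 else 0) * (if l = y then 1 else 0))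
            + S x y / 2 * ((if k = y then 1 else 0) * (if l = x then 1 else 0)) :=
        fun y x => by ring
      simp only [hsw, Finset.sum_add_distrib]
      simp [mul_ite, ite_mul, mul_zero, zero_mul, mul_one, Finset.sum_ite_eq,
        Finset.sum_ite_eq', hS']
    rw [hrepr]
    exact Submodule.sum_mem _ fun i _ => Submodule.sum_mem _ fun j _ =>
      Submodule.smul_mem _ _ (key i j)


noncomputable def psiL {n : ℕ} (u v : Fin n → ℝ) :
    Matrix (Fin n) (Fin n) ℝ →ₗ[ℝ] ℝ where
  toFun M := u ⬝ᵥ M.mulVec v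
  map_add' A B := by simp [Matrix.add_mulVec, dotProduct_add]
  map_smul' c A := by simp [Matrix.smul_mulVec, dotProduct_smul]

lemma psiL_vmv {n : ℕ} (u v a c : Fin n → ℝ) :
    psiL u v (vecMulVec a c) = (u ⬝ᵥ a) * (c ⬝ᵥ v) := by
  show u ⬝ᵥ (vecMulVec a c).mulVec v = _
  have : (vecMulVec a c).mulVec v = (c ⬝ᵥ v) • a := by
    ext k
    simp [Matrix.mulVec, vecMulVec_apply, dotProduct, Finset.mul_sum, mul_assoc, mul_comm,
      mul_left_comm]
  rw [this, dotProduct_smul, smul_eq_mul, mul_comm]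

noncomputable def Phi {n d : ℕ} (w : Fin d → (Fin n → ℝ)) :
    Matrix (Fin d) (Fin d) ℝ →ₗ[ℝ] Matrix (Fin n) (Fin n) ℝ where
  toFun S := ∑ i, ∑ j, S i j • vecMulVec (w i) (w j)
  map_add' A B := by
    rw [← Finset.sum_add_distrib]
    refine Finset.sum_congr rfl fun i _ => ?_
    rw [← Finset.sum_add_distrib]
    exact Finset.sum_congr rfl fun j _ => by rw [Matrix.add_apply, add_smul]
  map_smul' c A := by
    simp only [RingHom.id_apply, Finset.smul_sum, Matrix.smul_apply, smul_eq_mul, mul_smul]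

lemma Phi_vmv {n d : ℕ} (w : Fin d → (Fin n → ℝ)) (v : Fin d → ℝ) :
    Phi w (vecMulVec v v) = vecMulVec (∑ i, v i • w i) (∑ i, v i • w i) := by
  show (∑ i, ∑ j, (vecMulVec v v) i j • vecMulVec (w i) (w j)) = _
  ext k l
  simp only [Matrix.sum_apply, Matrix.smul_apply, vecMulVec_apply, smul_eq_mul,
    Finset.sum_apply, Pi.smul_apply]
  rw [Finset.sum_mul_sum]
  exact Finset.sum_congr rfl fun i _ => Finset.sum_congr rfl fun j _ => by ring

lemma Phi_injective {n d : ℕ} (w : Fin d → (Fin n → ℝ)) (u : Fin d → (Fin n → ℝ))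
    (hw : ∀ i j, w j ⬝ᵥ u i = if i = j then 1 else 0) :
    Function.Injective (Phi w) := by
  rw [injective_iff_map_eq_zero]
  intro S hS
  ext p q
  have h0 : psiL (u p) (u q) (Phi w S) = 0 := by rw [hS, map_zero]
  have h1 : psiL (u p) (u q) (Phi w S) = S p q := by
    show psiL (u p) (u q) (∑ i, ∑ j, S i j • vecMulVec (w i) (w j)) = S p q
    rw [map_sum]
    have : ∀ i, psiL (u p) (u q) (∑ j, S i j • vecMulVec (w i) (w j))
        = ∑ j, S i j * ((if p = i then 1 else 0) * (if q = j then 1 else 0)) := by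
      intro i
      rw [map_sum]
      refine Finset.sum_congr rfl fun j _ => ?_
      rw [_root_.map_smul, smul_eq_mul, psiL_vmv, dotProduct_comm, hw, hw]
    simp only [this]
    simp [Finset.sum_ite_eq, Finset.sum_ite_eq', mul_ite, ite_mul, mul_zero, zero_mul, mul_one]
  rw [h1] at h0
  simpa using h0

end Aux

/-- if a `d`-dimensional subspace `X` meets `int Lⁿ`, then
`dim CP(X ∩ Lⁿ) = d(d+1)/2` (here `n = m + 1 ≥ 2`). -/
theorem stmt11 (m : ℕ) (hm : 1 ≤ m) (d : ℕ) (X : Submodule ℝ (Fin (m+1) → ℝ))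
    (hd : Module.finrank ℝ X = d)
    (hint : ((X : Set (Fin (m+1) → ℝ)) ∩ socInt m).Nonempty) :
    setDim (CPset ((X : Set (Fin (m+1) → ℝ)) ∩ soc m)) = d * (d + 1) / 2 := by
  classical
  have : Module.Finite ℝ X := inferInstance
  let b : Module.Basis (Fin d) ℝ X := Module.finBasisOfFinrankEq ℝ X hd
  set w : Fin d → (Fin (m+1) → ℝ) := fun i => (b i : Fin (m+1) → ℝ) with hw_def
  -- dual functionals
  have hdual : ∀ i : Fin d, ∃ u : Fin (m+1) → ℝ,
      ∀ j, w j ⬝ᵥ u = if i = j then 1 else 0 := by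
    intro i
    obtain ⟨g, hg⟩ := LinearMap.exists_extend (b.coord i)
    refine ⟨fun k => g (fun j => if k = j then 1 else 0), fun j => ?_⟩
    have h1 : w j ⬝ᵥ (fun k => g (fun j => if k = j then 1 else 0)) = g (w j) := by
      rw [LinearMap.pi_apply_eq_sum_univ g (w j)]
      simp [dotProduct, smul_eq_mul]
    rw [h1]
    have h2 : g (w j) = b.coord i (b j) := by rw [← hg]; rfl
    rw [h2, Module.Basis.coord_apply, Module.Basis.repr_self, Finsupp.single_apply]
    by_cases h : i = j
    · simp [h]
    · have h' : ¬ j = i := fun hji => h hji.symm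
      simp [h, h']
  choose u hu using hdual
  have hinj : Function.Injective (Phi w) := Phi_injective w u hu
  -- set equality
  have hset : {A | ∃ a ∈ (X : Set (Fin (m+1) → ℝ)), A = vecMulVec a a}
      = (Phi w) '' {A : Matrix (Fin d) (Fin d) ℝ | ∃ v, A = vecMulVec v v} := by
    ext A
    constructor
    · rintro ⟨a, ha, rfl⟩
      refine ⟨vecMulVec (b.repr ⟨a, ha⟩) (b.repr ⟨a, ha⟩), ⟨_, rfl⟩, ?_⟩
      rw [Phi_vmv]
      have h2 : (∑ x, b.repr ⟨a, ha⟩ x • w x) = a := by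
        have := congrArg (Submodule.subtype X) (b.sum_repr ⟨a, ha⟩)
        rw [map_sum] at this
        simpa [hw_def] using this
      rw [h2]
    · rintro ⟨-, ⟨v, rfl⟩, rfl⟩
      rw [Phi_vmv]
      exact ⟨∑ i, v i • w i, X.sum_mem fun i _ => X.smul_mem _ (b i).2, rfl⟩
  show Module.finrank ℝ (Submodule.span ℝ (CPset ((X : Set (Fin (m+1) → ℝ)) ∩ soc m))) = _
  rw [span_CPset, span_trick m X hint, hset, Submodule.span_image, span_vmv_eq_symSub]
  rw [← LinearEquiv.finrank_eq (Submodule.equivMapOfInjective (Phi w) hinj (symSub d))]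
  exact finrank_symSub d
end

section
/- Let n ≥ 2 and let X be a linear subspace of ℝⁿ such that X ∩ int Lⁿ = ∅ and X ∩ Lⁿ ⊋ {0}. Then there exists x ∈ ∂Lⁿ \ {0} such that X ∩ Lⁿ = ℝ₊x; consequently CP(X ∩ Lⁿ) = ℝ₊·xxᵀ, which has dimension 1. -/
open Matrix
open scoped Pointwise

/-- if a subspace `X` misses `int Lⁿ` but `X ∩ Lⁿ ⊋ {0}`, then
`X ∩ Lⁿ = ℝ₊x` for some `x ∈ ∂Lⁿ \ {0}`, so `CP(X ∩ Lⁿ) = ℝ₊ xxᵀ` has dimension 1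
(here `n = m + 1 ≥ 2`). -/
theorem stmt13 (m : ℕ) (hm : 1 ≤ m) (X : Submodule ℝ (Fin (m+1) → ℝ))
    (h1 : (X : Set (Fin (m+1) → ℝ)) ∩ socInt m = ∅)
    (h2 : ({0} : Set (Fin (m+1) → ℝ)) ⊂ (X : Set (Fin (m+1) → ℝ)) ∩ soc m) :
    ∃ x : Fin (m+1) → ℝ, x ∈ socBd m ∧ x ≠ 0 ∧
      (X : Set (Fin (m+1) → ℝ)) ∩ soc m = rayOf x ∧
      CPset ((X : Set (Fin (m+1) → ℝ)) ∩ soc m) = rayOf (Matrix.vecMulVec x x) ∧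
      setDim (CPset ((X : Set (Fin (m+1) → ℝ)) ∩ soc m)) = 1 := by
  classical
  -- tail map into Euclidean space
  set T : (Fin (m+1) → ℝ) → EuclideanSpace ℝ (Fin m) := fun y => WithLp.toLp 2 (fun i => y i.succ) with hT
  have hnormT : ∀ y : Fin (m+1) → ℝ, ‖T y‖ = Real.sqrt (∑ i : Fin m, y i.succ ^ 2) := by
    intro y
    rw [EuclideanSpace.norm_eq]
    congr 1
    refine Finset.sum_congr rfl fun i _ => ?_
    simp [hT, Real.norm_eq_abs, sq_abs]
  -- every point of X ∩ soc lies on the boundary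
  have hbd : ∀ y ∈ (X : Set (Fin (m+1) → ℝ)) ∩ soc m, Real.sqrt (∑ i : Fin m, y i.succ ^ 2) = y 0 := by
    intro y hy
    have hni : y ∉ socInt m := fun h => Set.eq_empty_iff_forall_notMem.1 h1 y ⟨hy.1, h⟩
    exact le_antisymm hy.2 (not_lt.1 hni)
  have hnb : ∀ y ∈ (X : Set (Fin (m+1) → ℝ)) ∩ soc m, ‖T y‖ = y 0 := fun y hy => by
    rw [hnormT]; exact hbd y hy
  -- zero characterization
  have hzero : ∀ y ∈ (X : Set (Fin (m+1) → ℝ)) ∩ soc m, T y = 0 → y = 0 := by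
    intro y hy h0
    have h00 : y 0 = 0 := by
      have := hnb y hy; rw [h0, norm_zero] at this; exact this.symm
    funext i
    refine Fin.cases ?_ (fun j => ?_) i
    · exact h00
    · exact congrArg (fun v : EuclideanSpace ℝ (Fin m) => v j) h0
  obtain ⟨x, hxA, hxne0'⟩ := Set.exists_of_ssubset h2
  have hxne : x ≠ 0 := by simpa using hxne0'
  have hTx : T x ≠ 0 := fun h => hxne (hzero x hxA h)
  -- the ray characterization
  have hray : ∀ y ∈ (X : Set (Fin (m+1) → ℝ)) ∩ soc m, ∃ c : ℝ, 0 ≤ c ∧ y = c • x := by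
    intro y hy
    have hsumX : x + y ∈ X := X.add_mem hxA.1 hy.1
    have hTadd : T (x + y) = T x + T y := rfl
    have hsoc : x + y ∈ soc m := by
      show Real.sqrt (∑ i : Fin m, (x + y) i.succ ^ 2) ≤ (x + y) 0
      rw [← hnormT, hTadd]
      calc ‖T x + T y‖ ≤ ‖T x‖ + ‖T y‖ := norm_add_le _ _
        _ = x 0 + y 0 := by rw [hnb x hxA, hnb y hy]
        _ = (x + y) 0 := rfl
    have heq : ‖T x + T y‖ = ‖T x‖ + ‖T y‖ := by
      rw [← hTadd, hnb _ ⟨hsumX, hsoc⟩, hnb x hxA, hnb y hy]; rfl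
    have hsr : SameRay ℝ (T x) (T y) := sameRay_iff_norm_add.mpr heq
    obtain ⟨r, hr, hrx⟩ := hsr.exists_nonneg_left hTx
    refine ⟨r, hr, ?_⟩
    funext i
    refine Fin.cases ?_ (fun j => ?_) i
    · have : ‖T y‖ = r * ‖T x‖ := by
        rw [← hrx, norm_smul, Real.norm_eq_abs, abs_of_nonneg hr]
      have := this
      rw [hnb y hy, hnb x hxA] at this
      simpa using this
    · have h := congrArg (fun v : EuclideanSpace ℝ (Fin m) => v j) hrx
      simp only [hT, PiLp.smul_apply, PiLp.toLp_apply, smul_eq_mul] at h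
      simpa using h.symm
  have hAray : (X : Set (Fin (m+1) → ℝ)) ∩ soc m = rayOf x := by
    ext y
    constructor
    · intro hy
      obtain ⟨c, hc, hcy⟩ := hray y hy
      exact ⟨c, hc, hcy⟩
    · rintro ⟨c, hc, rfl⟩
      refine ⟨X.smul_mem c hxA.1, ?_⟩
      show Real.sqrt (∑ i : Fin m, (c • x) i.succ ^ 2) ≤ (c • x) 0
      have : ∑ i : Fin m, (c • x) i.succ ^ 2 = c ^ 2 * ∑ i : Fin m, x i.succ ^ 2 := by
        rw [Finset.mul_sum]
        exact Finset.sum_congr rfl fun i _ => by simp [smul_eq_mul, mul_pow]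
      rw [this, Real.sqrt_mul (sq_nonneg c), Real.sqrt_sq_eq_abs, abs_of_nonneg hc,
        hbd x hxA]
      exact le_of_eq rfl
  have hvne : Matrix.vecMulVec x x ≠ 0 := by
    obtain ⟨i, hi⟩ := Function.ne_iff.mp hxne
    intro h
    have := congrFun (congrFun h i) i
    simp [Matrix.vecMulVec_apply] at this
    exact hi this
  have hCP : CPset ((X : Set (Fin (m+1) → ℝ)) ∩ soc m) = rayOf (Matrix.vecMulVec x x) := by
    rw [hAray]
    ext A
    constructor
    · rintro ⟨k, hk, f, hf, rfl⟩
      choose c hc hfc using hf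
      refine ⟨∑ i, c i * c i, Finset.sum_nonneg fun i _ => mul_nonneg (hc i) (hc i), ?_⟩
      rw [Finset.sum_smul]
      refine Finset.sum_congr rfl fun i _ => ?_
      rw [hfc i]
      ext a b
      simp [Matrix.vecMulVec_apply, smul_eq_mul]
      ring
    · rintro ⟨c, hc, rfl⟩
      refine ⟨1, one_pos, fun _ => Real.sqrt c • x, fun _ => ⟨Real.sqrt c, Real.sqrt_nonneg c, rfl⟩, ?_⟩
      rw [Fin.sum_univ_one]
      ext a b
      simp [Matrix.vecMulVec_apply, smul_eq_mul]
      rw [show Real.sqrt c * x a * (Real.sqrt c * x b) = (Real.sqrt c * Real.sqrt c) * (x a * x b) by ring,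
        Real.mul_self_sqrt hc]
  have hspan : Submodule.span ℝ (rayOf (Matrix.vecMulVec x x)) =
      Submodule.span ℝ ({Matrix.vecMulVec x x} : Set (Matrix (Fin (m+1)) (Fin (m+1)) ℝ)) := by
    apply le_antisymm
    · rw [Submodule.span_le]
      rintro A ⟨c, hc, rfl⟩
      exact Submodule.smul_mem _ c (Submodule.subset_span rfl)
    · rw [Submodule.span_le]
      rintro A hA
      rw [Set.mem_singleton_iff] at hA
      subst hA
      exact Submodule.subset_span ⟨1, zero_le_one, (one_smul ℝ _).symm⟩
  refine ⟨x, hbd x hxA, hxne, hAray, hCP, ?_⟩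
  rw [hCP]
  unfold setDim
  rw [hspan]
  exact finrank_span_singleton hvne
end

section
/- Let K₁ and K₂ be closed convex cones in a finite-dimensional real inner product space and let K = K₁ ∩ K₂. If every chain of faces of K₁ has length at most l₁ and every chain of faces of K₂ has length at most l₂, then every chain of faces of K has length at most l₁ + l₂ − 1. -/
open Matrix
open scoped Pointwise

section Aux

variable {E : Type*} [AddCommGroup E] [Module ℝ E]

/-- The minimal face of a convex cone `C` containing `x`. -/
def minFace (C : Set E) (x : E) : Set E :=
  {y | y ∈ C ∧ ∃ t : ℝ, 0 < t ∧ x - t • y ∈ C}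

lemma cone_add_mem {C : Set E} (hconv : Convex ℝ C)
    (hcone : ∀ y ∈ C, ∀ c : ℝ, 0 ≤ c → c • y ∈ C)
    {a b : E} (ha : a ∈ C) (hb : b ∈ C) : a + b ∈ C := by
  have h := hconv ha hb (by norm_num : (0:ℝ) ≤ 1/2) (by norm_num : (0:ℝ) ≤ 1/2) (by norm_num)
  have h2 := hcone _ h 2 (by norm_num)
  have heq : (2:ℝ) • ((1/2:ℝ) • a + (1/2:ℝ) • b) = a + b := by
    rw [smul_add, smul_smul, smul_smul]; norm_num
  rwa [heq] at h2

lemma cone_zero_mem {C : Set E}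
    (hcone : ∀ y ∈ C, ∀ c : ℝ, 0 ≤ c → c • y ∈ C) (hne : C.Nonempty) : (0:E) ∈ C := by
  obtain ⟨x, hx⟩ := hne
  simpa using hcone x hx 0 le_rfl

lemma mem_minFace_self {C : Set E} {x : E} (hx : x ∈ C) (h0 : (0:E) ∈ C) :
    x ∈ minFace C x :=
  ⟨hx, 1, one_pos, by simpa⟩

lemma minFace_isFaceOf {C : Set E} (hconv : Convex ℝ C)
    (hcone : ∀ y ∈ C, ∀ c : ℝ, 0 ≤ c → c • y ∈ C)
    {x : E} (hx : x ∈ C) : IsFaceOf C (minFace C x) := by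
  have h0 : (0:E) ∈ C := cone_zero_mem hcone ⟨x, hx⟩
  have h0' : (0:E) ∈ minFace C x := ⟨h0, 1, one_pos, by simpa⟩
  refine ⟨⟨0, h0'⟩, fun y hy => hy.1, ?_, ?_, ?_⟩
  · -- convex
    rintro y ⟨hyC, t1, ht1, hy1⟩ z ⟨hzC, t2, ht2, hz1⟩ a b ha hb hab
    set t := min t1 t2 with htdef
    have ht : 0 < t := lt_min ht1 ht2
    have hy2 : x - t • y ∈ C := by
      have heq : x - t • y = (x - t1 • y) + (t1 - t) • y := by module
      rw [heq]
      exact cone_add_mem hconv hcone hy1 (hcone y hyC _ (by simp [htdef, sub_nonneg]))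
    have hz2 : x - t • z ∈ C := by
      have heq : x - t • z = (x - t2 • z) + (t2 - t) • z := by module
      rw [heq]
      exact cone_add_mem hconv hcone hz1 (hcone z hzC _ (by simp [htdef, sub_nonneg]))
    refine ⟨hconv hyC hzC ha hb hab, t, ht, ?_⟩
    have key : a • (x - t • y) + b • (x - t • z) = (a + b) • x - t • (a • y + b • z) := by
      module
    rw [hab, one_smul] at key
    rw [← key]
    exact hconv hy2 hz2 ha hb hab
  · -- cone
    rintro y ⟨hyC, t, ht, hy1⟩ c hc
    rcases eq_or_lt_of_le hc with h | h
    · rw [← h, zero_smul]; exact h0'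
    · refine ⟨hcone y hyC c hc, t / c, div_pos ht h, ?_⟩
      rwa [smul_smul, div_mul_cancel₀ _ (ne_of_gt h)]
  · -- face property
    rintro a ha b hb ⟨habC, t, ht, h1⟩
    constructor
    · refine ⟨ha, t, ht, ?_⟩
      have heq : x - t • a = (x - t • (a + b)) + t • b := by module
      rw [heq]
      exact cone_add_mem hconv hcone h1 (hcone b hb t ht.le)
    · refine ⟨hb, t, ht, ?_⟩
      have heq : x - t • b = (x - t • (a + b)) + t • a := by module
      rw [heq]
      exact cone_add_mem hconv hcone h1 (hcone a ha t ht.le)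

lemma minFace_subset_face {C F : Set E}
    (hcone : ∀ y ∈ C, ∀ c : ℝ, 0 ≤ c → c • y ∈ C)
    (hF : IsFaceOf C F) {x : E} (hx : x ∈ F) : minFace C x ⊆ F := by
  rintro y ⟨hyC, t, ht, hy⟩
  have hty : t • y ∈ C := hcone y hyC t ht.le
  have hx' : (x - t • y) + t • y ∈ F := by simpa using hx
  have h2 := (hF.2.2.2.2 _ hy _ hty hx').2
  have h3 := hF.2.2.2.1 _ h2 t⁻¹ (inv_nonneg.mpr ht.le)
  rwa [smul_smul, inv_mul_cancel₀ ht.ne', one_smul] at h3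

lemma minFace_inter {K1 K2 : Set E} (hK1conv : Convex ℝ K1)
    (hK1cone : ∀ y ∈ K1, ∀ c : ℝ, 0 ≤ c → c • y ∈ K1)
    (hK2conv : Convex ℝ K2)
    (hK2cone : ∀ y ∈ K2, ∀ c : ℝ, 0 ≤ c → c • y ∈ K2) (x : E) :
    minFace (K1 ∩ K2) x = minFace K1 x ∩ minFace K2 x := by
  ext y
  constructor
  · rintro ⟨⟨h1, h2⟩, t, ht, h3, h4⟩
    exact ⟨⟨h1, t, ht, h3⟩, ⟨h2, t, ht, h4⟩⟩
  · rintro ⟨⟨h1, t1, ht1, h3⟩, ⟨h2, t2, ht2, h4⟩⟩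
    set t := min t1 t2 with htdef
    have ht : 0 < t := lt_min ht1 ht2
    refine ⟨⟨h1, h2⟩, t, ht, ?_, ?_⟩
    · have heq : x - t • y = (x - t1 • y) + (t1 - t) • y := by module
      rw [heq]
      exact cone_add_mem hK1conv hK1cone h3 (hK1cone y h1 _ (by simp [htdef, sub_nonneg]))
    · have heq : x - t • y = (x - t2 • y) + (t2 - t) • y := by module
      rw [heq]
      exact cone_add_mem hK2conv hK2cone h4 (hK2cone y h2 _ (by simp [htdef, sub_nonneg]))

lemma minFace_mono_add {C : Set E} (hconv : Convex ℝ C)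
    (hcone : ∀ y ∈ C, ∀ c : ℝ, 0 ≤ c → c • y ∈ C)
    {x v : E} (hv : v ∈ C) : minFace C x ⊆ minFace C (x + v) := by
  rintro y ⟨hyC, t, ht, hy⟩
  refine ⟨hyC, t, ht, ?_⟩
  have heq : x + v - t • y = (x - t • y) + v := by module
  rw [heq]
  exact cone_add_mem hconv hcone hy hv

/-- The number of jumps in a weakly increasing sequence of faces is bounded by the
maximal chain length minus one. -/
lemma jumps_card_bound {K : Set E} (A : ℕ → Set E)
    (hstep : ∀ n, A n ⊆ A (n+1))
    (hface : ∀ n, IsFaceOf K (A n))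
    (l1 : ℕ)
    (hl1 : ∀ (l : ℕ) (F : Fin l → Set E),
        StrictMono F → (∀ i, IsFaceOf K (F i)) → l ≤ l1)
    (J : Finset ℕ) (hJmem : ∀ n ∈ J, A n ≠ A (n+1)) :
    J.card + 1 ≤ l1 := by
  classical
  have hmono : Monotone A := monotone_nat_of_le_succ (fun n => hstep n)
  obtain h0 | hpos := Nat.eq_zero_or_pos J.card
  · rw [h0]
    exact hl1 1 (fun _ => A 0) (Subsingleton.strictMono _) (fun _ => hface 0)
  · set m := J.card with hm
    set e := J.orderIsoOfFin hm.symm with he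
    have hjump : ∀ i : Fin m, A ((e i : ℕ)) < A ((e i : ℕ) + 1) := by
      intro i
      exact lt_of_le_of_ne (hstep _) (hJmem _ (e i).2)
    set g : Fin (m+1) → Set E := fun k =>
      if h : (k : ℕ) < m then A ((e ⟨k, h⟩ : ℕ))
      else A ((e ⟨m-1, by omega⟩ : ℕ) + 1) with hg
    have hgface : ∀ k, IsFaceOf K (g k) := by
      intro k; rw [hg]; dsimp only; split <;> exact hface _
    have hgsm : StrictMono g := by
      intro k1 k2 hlt
      have hlt' : (k1 : ℕ) < (k2 : ℕ) := hlt
      have hk2m : (k2 : ℕ) < m + 1 := k2.isLt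
      have hk1 : (k1 : ℕ) < m := by omega
      rw [hg]; dsimp only
      rw [dif_pos hk1]
      by_cases hk2 : (k2 : ℕ) < m
      · rw [dif_pos hk2]
        have h1 : (e ⟨k1, hk1⟩ : ℕ) < (e ⟨k2, hk2⟩ : ℕ) := by
          have := e.strictMono (show (⟨(k1:ℕ), hk1⟩ : Fin m) < ⟨(k2:ℕ), hk2⟩ from hlt')
          exact_mod_cast this
        exact lt_of_lt_of_le (hjump ⟨k1, hk1⟩)
          (hmono (show (e ⟨(k1:ℕ), hk1⟩ : ℕ) + 1 ≤ (e ⟨(k2:ℕ), hk2⟩ : ℕ) by omega))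
      · rw [dif_neg hk2]
        have h1 : (e ⟨k1, hk1⟩ : ℕ) ≤ (e ⟨m-1, by omega⟩ : ℕ) := by
          have := e.monotone (show (⟨(k1:ℕ), hk1⟩ : Fin m) ≤ ⟨m-1, by omega⟩ from by
            simp only [Fin.mk_le_mk]; omega)
          exact_mod_cast this
        exact lt_of_lt_of_le (hjump ⟨k1, hk1⟩)
          (hmono (show (e ⟨(k1:ℕ), hk1⟩ : ℕ) + 1 ≤ (e ⟨m-1, by omega⟩ : ℕ) + 1 by omega))
    have := hl1 (m+1) g hgsm hgface
    omega

end Aux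

/-- chains of faces of an intersection of two closed convex cones:
`ℓ_{K₁ ∩ K₂} ≤ ℓ_{K₁} + ℓ_{K₂} − 1`. -/
theorem stmt14 {E : Type*} [NormedAddCommGroup E] [InnerProductSpace ℝ E]
    [FiniteDimensional ℝ E]
    (K1 K2 : Set E) (hK1cl : IsClosed K1) (hK1conv : Convex ℝ K1)
    (hK1cone : ∀ x ∈ K1, ∀ c : ℝ, 0 ≤ c → c • x ∈ K1)
    (hK2cl : IsClosed K2) (hK2conv : Convex ℝ K2)
    (hK2cone : ∀ x ∈ K2, ∀ c : ℝ, 0 ≤ c → c • x ∈ K2)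
    (l1 l2 : ℕ)
    (hl1 : ∀ (l : ℕ) (F : Fin l → Set E),
        StrictMono F → (∀ i, IsFaceOf K1 (F i)) → l ≤ l1)
    (hl2 : ∀ (l : ℕ) (F : Fin l → Set E),
        StrictMono F → (∀ i, IsFaceOf K2 (F i)) → l ≤ l2) :
    ∀ (l : ℕ) (F : Fin l → Set E),
      StrictMono F → (∀ i, IsFaceOf (K1 ∩ K2) (F i)) → l ≤ l1 + l2 - 1 := by
  classical
  intro l F hFsm hFface
  rcases Nat.eq_zero_or_pos l with rfl | hl
  · omega
  set K := K1 ∩ K2 with hK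
  have hKconv : Convex ℝ K := hK1conv.inter hK2conv
  have hKcone : ∀ x ∈ K, ∀ c : ℝ, 0 ≤ c → c • x ∈ K := by
    rintro x ⟨h1, h2⟩ c hc
    exact ⟨hK1cone x h1 c hc, hK2cone x h2 c hc⟩
  -- extend the chain to a chain indexed by ℕ
  set F' : ℕ → Set E := fun n => F ⟨min n (l-1), by omega⟩ with hF'
  have hF'face : ∀ n, IsFaceOf K (F' n) := fun n => hFface _
  have hF'mono : ∀ a b : ℕ, a ≤ b → F' a ⊆ F' b := by
    intro a b hab
    exact hFsm.monotone (show (⟨min a (l-1), _⟩ : Fin l) ≤ ⟨min b (l-1), _⟩ from by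
      simp only [Fin.mk_le_mk]; omega)
  have hF'strict : ∀ n, n < l - 1 → F' n ⊂ F' (n+1) := by
    intro n hn
    exact hFsm (show (⟨min n (l-1), _⟩ : Fin l) < ⟨min (n+1) (l-1), _⟩ from by
      simp only [Fin.mk_lt_mk]; omega)
  -- choose points witnessing strictness
  have hxex : ∀ n : ℕ, ∃ v, v ∈ F' n ∧ (∀ p, n = p + 1 → p < l - 1 → v ∉ F' p) := by
    intro n
    match n with
    | 0 =>
      obtain ⟨v, hv⟩ := (hF'face 0).1
      exact ⟨v, hv, fun p hp => by omega⟩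
    | k+1 =>
      by_cases hk : k < l - 1
      · obtain ⟨v, hv1, hv2⟩ := Set.exists_of_ssubset (hF'strict k hk)
        refine ⟨v, hv1, fun p hp hp2 => ?_⟩
        obtain rfl : p = k := by omega
        exact hv2
      · obtain ⟨v, hv⟩ := (hF'face (k+1)).1
        refine ⟨v, hv, fun p hp hp2 => ?_⟩
        obtain rfl : p = k := by omega
        exact absurd hp2 hk
  choose x hx1 hx2 using hxex
  -- partial sums
  set s : ℕ → E := fun n => ∑ j ∈ Finset.range (n+1), x j with hs
  have hsF' : ∀ n, s n ∈ F' n := by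
    intro n
    induction n with
    | zero => simpa [hs, Finset.sum_range_one] using hx1 0
    | succ k ih =>
      have hstep : s (k+1) = s k + x (k+1) := by
        simp [hs, Finset.sum_range_succ]
      rw [hstep]
      have hf := hF'face (k+1)
      exact cone_add_mem hf.2.2.1 hf.2.2.2.1 (hF'mono k (k+1) (by omega) ih) (hx1 (k+1))
  have hsK : ∀ n, s n ∈ K := fun n => (hF'face n).2.1 (hsF' n)
  have hxK : ∀ n, x n ∈ K := fun n => (hF'face n).2.1 (hx1 n)
  have hssucc : ∀ n, s (n+1) = s n + x (n+1) := by
    intro n; simp [hs, Finset.sum_range_succ]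
  -- minimal faces of K1 and K2 containing s n
  set A : ℕ → Set E := fun n => minFace K1 (s n) with hA
  set B : ℕ → Set E := fun n => minFace K2 (s n) with hB
  have hAface : ∀ n, IsFaceOf K1 (A n) := fun n =>
    minFace_isFaceOf hK1conv hK1cone (hsK n).1
  have hBface : ∀ n, IsFaceOf K2 (B n) := fun n =>
    minFace_isFaceOf hK2conv hK2cone (hsK n).2
  have hAstep : ∀ n, A n ⊆ A (n+1) := by
    intro n
    rw [hA]; dsimp only; rw [hssucc n]
    exact minFace_mono_add hK1conv hK1cone (hxK (n+1)).1
  have hBstep : ∀ n, B n ⊆ B (n+1) := by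
    intro n
    rw [hB]; dsimp only; rw [hssucc n]
    exact minFace_mono_add hK2conv hK2cone (hxK (n+1)).2
  -- at every step at least one of A, B jumps
  have hcover : ∀ n, n < l - 1 → A n ≠ A (n+1) ∨ B n ≠ B (n+1) := by
    intro n hn
    by_contra h
    push_neg at h
    obtain ⟨hAeq, hBeq⟩ := h
    have hxmem : x (n+1) ∈ minFace K (s (n+1)) := by
      refine ⟨hxK (n+1), 1, one_pos, ?_⟩
      rw [one_smul, hssucc n]
      simpa using hsK n
    rw [minFace_inter hK1conv hK1cone hK2conv hK2cone] at hxmem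
    have hxmem2 : x (n+1) ∈ minFace K (s n) := by
      rw [minFace_inter hK1conv hK1cone hK2conv hK2cone]
      have h1 : x (n+1) ∈ A (n+1) := hxmem.1
      have h2 : x (n+1) ∈ B (n+1) := hxmem.2
      rw [← hAeq] at h1
      rw [← hBeq] at h2
      exact ⟨h1, h2⟩
    have hxF : x (n+1) ∈ F' n :=
      minFace_subset_face hKcone (hF'face n) (hsF' n) hxmem2
    exact hx2 (n+1) n rfl hn hxF
  -- counting
  have hcard1 := jumps_card_bound A hAstep hAface l1 hl1
    ((Finset.range (l-1)).filter (fun n => A n ≠ A (n+1)))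
    (fun n hn => (Finset.mem_filter.mp hn).2)
  have hcard2 := jumps_card_bound B hBstep hBface l2 hl2
    ((Finset.range (l-1)).filter (fun n => B n ≠ B (n+1)))
    (fun n hn => (Finset.mem_filter.mp hn).2)
  have hsub : Finset.range (l-1) ⊆
      ((Finset.range (l-1)).filter (fun n => A n ≠ A (n+1))) ∪
      ((Finset.range (l-1)).filter (fun n => B n ≠ B (n+1))) := by
    intro n hn
    rw [Finset.mem_range] at hn
    rcases hcover n hn with h | h
    · exact Finset.mem_union_left _ (Finset.mem_filter.mpr ⟨Finset.mem_range.mpr hn, h⟩)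
    · exact Finset.mem_union_right _ (Finset.mem_filter.mpr ⟨Finset.mem_range.mpr hn, h⟩)
  have hcount : l - 1 ≤
      ((Finset.range (l-1)).filter (fun n => A n ≠ A (n+1))).card +
      ((Finset.range (l-1)).filter (fun n => B n ≠ B (n+1))).card := by
    calc l - 1 = (Finset.range (l-1)).card := (Finset.card_range _).symm
      _ ≤ _ := le_trans (Finset.card_le_card hsub) (Finset.card_union_le _ _)
  omega
end

section
/- Let K be a closed cone in ℝⁿ and X a linear subspace of ℝⁿ. Then CP(X ∩ K) is an exposed face of CP(K). Moreover, if K is additionally convex and the linear span of X ∩ K has dimension d, then the dimension of CP(X ∩ K) equals T_d = d(d+1)/2. -/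
open Matrix
open scoped Pointwise

section AuxLemmas

open Matrix
variable {n : ℕ}

lemma mip_vecMulVec (u v a b : Fin n → ℝ) :
    mip (vecMulVec u v) (vecMulVec a b) = (u ⬝ᵥ a) * (v ⬝ᵥ b) := by
  simp only [mip, vecMulVec_apply, dotProduct]
  rw [Finset.sum_mul_sum]
  exact Finset.sum_congr rfl fun i _ => Finset.sum_congr rfl fun j _ => by ring

/-- `mip H ·` as a linear map. -/
def mipL (H : Matrix (Fin n) (Fin n) ℝ) : Matrix (Fin n) (Fin n) ℝ →ₗ[ℝ] ℝ where
  toFun A := mip H A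
  map_add' A B := by
    simp [mip, Matrix.add_apply, mul_add, Finset.sum_add_distrib]
  map_smul' c A := by
    simp [mip, Matrix.smul_apply, Finset.mul_sum, smul_eq_mul]
    exact Finset.sum_congr rfl fun i _ => Finset.sum_congr rfl fun j _ => by ring

lemma mip_sum_right (H : Matrix (Fin n) (Fin n) ℝ) {ι : Type*} (s : Finset ι)
    (M : ι → Matrix (Fin n) (Fin n) ℝ) :
    mip H (∑ i ∈ s, M i) = ∑ i ∈ s, mip H (M i) :=
  map_sum (mipL H) M s

lemma mip_comm (A B : Matrix (Fin n) (Fin n) ℝ) : mip A B = mip B A := by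
  simp [mip, mul_comm]

lemma mip_sum_left (H : Matrix (Fin n) (Fin n) ℝ) {ι : Type*} (s : Finset ι)
    (M : ι → Matrix (Fin n) (Fin n) ℝ) :
    mip (∑ i ∈ s, M i) H = ∑ i ∈ s, mip (M i) H := by
  rw [mip_comm, mip_sum_right]
  exact Finset.sum_congr rfl fun i _ => mip_comm _ _

lemma mem_CPset_single {S : Set (Fin n → ℝ)} {a : Fin n → ℝ} (ha : a ∈ S) :
    vecMulVec a a ∈ CPset S :=
  ⟨1, one_pos, fun _ => a, fun _ => ha, by simp⟩

lemma CPset_add {S : Set (Fin n → ℝ)} {A B : Matrix (Fin n) (Fin n) ℝ}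
    (hA : A ∈ CPset S) (hB : B ∈ CPset S) : A + B ∈ CPset S := by
  obtain ⟨k, hk, f, hf, rfl⟩ := hA
  obtain ⟨l, hl, g, hg, rfl⟩ := hB
  refine ⟨k + l, by omega, Fin.append f g, ?_, ?_⟩
  · intro i
    refine Fin.addCases (fun j => ?_) (fun j => ?_) i
    · rw [Fin.append_left]; exact hf j
    · rw [Fin.append_right]; exact hg j
  · rw [Fin.sum_univ_add]
    congr 1
    · exact Finset.sum_congr rfl fun j _ => by rw [Fin.append_left]
    · exact Finset.sum_congr rfl fun j _ => by rw [Fin.append_right]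

lemma smul_vecMulVec (c : ℝ) (hc : 0 ≤ c) (a : Fin n → ℝ) :
    c • vecMulVec a a = vecMulVec (Real.sqrt c • a) (Real.sqrt c • a) := by
  ext i j
  simp only [Matrix.smul_apply, vecMulVec_apply, Pi.smul_apply, smul_eq_mul]
  rw [show Real.sqrt c * a i * (Real.sqrt c * a j)
      = (Real.sqrt c * Real.sqrt c) * (a i * a j) by ring, Real.mul_self_sqrt hc]

lemma CPset_smul {S : Set (Fin n → ℝ)} (hS : ∀ x ∈ S, ∀ c : ℝ, 0 ≤ c → c • x ∈ S)
    {A : Matrix (Fin n) (Fin n) ℝ} {c : ℝ} (hc : 0 ≤ c) (hA : A ∈ CPset S) :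
    c • A ∈ CPset S := by
  obtain ⟨k, hk, f, hf, rfl⟩ := hA
  refine ⟨k, hk, fun i => Real.sqrt c • f i, fun i => hS _ (hf i) _ (Real.sqrt_nonneg c), ?_⟩
  rw [Finset.smul_sum]
  exact Finset.sum_congr rfl fun i _ => smul_vecMulVec c hc (f i)

end AuxLemmas
section ExposedAux

open Matrix
variable {n : ℕ} (X : Submodule ℝ (Fin n → ℝ))

/-- `X` viewed as a subspace of Euclidean space. -/
noncomputable def XeSub : Submodule ℝ (EuclideanSpace ℝ (Fin n)) :=
  X.comap (WithLp.linearEquiv 2 ℝ (Fin n → ℝ)).toLinearMap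

/-- A basis of the orthogonal complement of `X`. -/
noncomputable def perpBasis := Module.finBasis ℝ ↥(XeSub X)ᗮ

/-- Basis vectors of `Xᗮ`, as plain vectors. -/
noncomputable def pvec (j : Fin (Module.finrank ℝ ↥(XeSub X)ᗮ)) : Fin n → ℝ :=
  WithLp.ofLp (perpBasis X j : EuclideanSpace ℝ (Fin n))

/-- The exposing matrix: sum of `v vᵀ` over the basis of `Xᗮ`. -/
noncomputable def Hmat : Matrix (Fin n) (Fin n) ℝ := ∑ j, vecMulVec (pvec X j) (pvec X j)

lemma inner_eq_dot (x y : EuclideanSpace ℝ (Fin n)) :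
    (inner ℝ x y : ℝ) = WithLp.ofLp x ⬝ᵥ WithLp.ofLp y := by
  simp [PiLp.inner_apply, dotProduct, mul_comm]

lemma pvec_dot_eq_zero_iff (a : Fin n → ℝ) :
    (∀ j, pvec X j ⬝ᵥ a = 0) ↔ a ∈ X := by
  constructor
  · intro h
    have ha : WithLp.toLp 2 a ∈ ((XeSub X)ᗮ)ᗮ := by
      intro u hu
      have : (⟨u, hu⟩ : ↥(XeSub X)ᗮ) = ∑ j, (perpBasis X).repr ⟨u, hu⟩ j • perpBasis X j :=
        ((perpBasis X).sum_repr ⟨u, hu⟩).symm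
      have hu' : u = ∑ j, (perpBasis X).repr ⟨u, hu⟩ j • (perpBasis X j : EuclideanSpace ℝ (Fin n)) := by
        have := congrArg (Subtype.val) this
        simp only [Submodule.coe_sum, Submodule.coe_smul] at this
        exact this
      rw [hu', sum_inner]
      refine Finset.sum_eq_zero fun j _ => ?_
      rw [inner_smul_left]
      have : (inner ℝ ((perpBasis X j : EuclideanSpace ℝ (Fin n))) (WithLp.toLp 2 a) : ℝ) = 0 := by
        rw [inner_eq_dot]; exact h j
      rw [this, mul_zero]
    rwa [Submodule.orthogonal_orthogonal] at ha
  · intro ha j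
    have hmem : (perpBasis X j : EuclideanSpace ℝ (Fin n)) ∈ (XeSub X)ᗮ := (perpBasis X j).2
    have := hmem (WithLp.toLp 2 a) ha
    rw [real_inner_comm, inner_eq_dot] at this
    exact this

lemma mip_Hmat_vecMulVec (a : Fin n → ℝ) :
    mip (Hmat X) (vecMulVec a a) = ∑ j, (pvec X j ⬝ᵥ a) ^ 2 := by
  rw [Hmat, mip_sum_left]
  exact Finset.sum_congr rfl fun j _ => by rw [mip_vecMulVec]; ring

lemma mip_Hmat_nonneg {S : Set (Fin n → ℝ)} {A : Matrix (Fin n) (Fin n) ℝ}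
    (hA : A ∈ CPset S) : 0 ≤ mip (Hmat X) A := by
  obtain ⟨k, hk, f, hf, rfl⟩ := hA
  rw [mip_sum_right]
  refine Finset.sum_nonneg fun i _ => ?_
  rw [mip_Hmat_vecMulVec]
  exact Finset.sum_nonneg fun j _ => sq_nonneg _

lemma mip_Hmat_zero_of_mem {K : Set (Fin n → ℝ)} {A : Matrix (Fin n) (Fin n) ℝ}
    (hA : A ∈ CPset ((X : Set (Fin n → ℝ)) ∩ K)) : mip (Hmat X) A = 0 := by
  obtain ⟨k, hk, f, hf, rfl⟩ := hA
  rw [mip_sum_right]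
  refine Finset.sum_eq_zero fun i _ => ?_
  rw [mip_Hmat_vecMulVec]
  refine Finset.sum_eq_zero fun j _ => ?_
  rw [(pvec_dot_eq_zero_iff X (f i)).2 (hf i).1]
  ring

lemma mem_of_mip_Hmat_zero {K : Set (Fin n → ℝ)} {A : Matrix (Fin n) (Fin n) ℝ}
    (hA : A ∈ CPset K) (h0 : mip (Hmat X) A = 0) :
    A ∈ CPset ((X : Set (Fin n → ℝ)) ∩ K) := by
  obtain ⟨k, hk, f, hf, rfl⟩ := hA
  rw [mip_sum_right] at h0
  have hterm : ∀ i ∈ Finset.univ, mip (Hmat X) (vecMulVec (f i) (f i)) = 0 := by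
    rw [← Finset.sum_eq_zero_iff_of_nonneg]
    · exact h0
    · intro i _
      rw [mip_Hmat_vecMulVec]
      exact Finset.sum_nonneg fun j _ => sq_nonneg _
  refine ⟨k, hk, f, fun i => ⟨?_, hf i⟩, rfl⟩
  show f i ∈ X
  rw [← pvec_dot_eq_zero_iff X (f i)]
  intro j
  have := hterm i (Finset.mem_univ i)
  rw [mip_Hmat_vecMulVec] at this
  have hj := (Finset.sum_eq_zero_iff_of_nonneg (fun j _ => sq_nonneg _)).1 this j (Finset.mem_univ j)
  exact pow_eq_zero_iff (by norm_num) |>.1 hj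

end ExposedAux
section DimAux

open Matrix
variable {n : ℕ}

/-- Symmetrized rank-one product `uvᵀ + vuᵀ`. -/
def symProd (u v : Fin n → ℝ) : Matrix (Fin n) (Fin n) ℝ :=
  vecMulVec u v + vecMulVec v u

lemma symProd_comm (u v : Fin n → ℝ) : symProd u v = symProd v u := by
  simp [symProd, add_comm]

lemma symProd_zero_right (u : Fin n → ℝ) : symProd u 0 = 0 := by
  ext i j; simp [symProd, vecMulVec_apply]

lemma symProd_add_right (u v w : Fin n → ℝ) :
    symProd u (v + w) = symProd u v + symProd u w := by
  ext i j; simp [symProd, vecMulVec_apply]; ring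

lemma symProd_smul_right (c : ℝ) (u v : Fin n → ℝ) :
    symProd u (c • v) = c • symProd u v := by
  ext i j; simp [symProd, vecMulVec_apply]; ring

lemma symProd_self (a : Fin n → ℝ) : vecMulVec a a = (2⁻¹ : ℝ) • symProd a a := by
  ext i j; simp [symProd, vecMulVec_apply]; ring

lemma symProd_eq_sub (u v : Fin n → ℝ) :
    symProd u v = vecMulVec (u + v) (u + v) - vecMulVec u u - vecMulVec v v := by
  ext i j; simp [symProd, vecMulVec_apply]; ring

lemma symProd_mem_span {W : Submodule ℝ (Matrix (Fin n) (Fin n) ℝ)} {s : Set (Fin n → ℝ)}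
    (h : ∀ u ∈ s, ∀ v ∈ s, symProd u v ∈ W) :
    ∀ u ∈ Submodule.span ℝ s, ∀ v ∈ Submodule.span ℝ s, symProd u v ∈ W := by
  have step1 : ∀ u ∈ s, ∀ v ∈ Submodule.span ℝ s, symProd u v ∈ W := by
    intro u hu v hv
    induction hv using Submodule.span_induction with
    | mem x hx => exact h u hu x hx
    | zero => rw [symProd_zero_right]; exact W.zero_mem
    | add x y hx hy ihx ihy => rw [symProd_add_right]; exact W.add_mem ihx ihy
    | smul c x hx ih => rw [symProd_smul_right]; exact W.smul_mem c ih
  intro u hu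
  induction hu using Submodule.span_induction with
  | mem x hx => exact step1 x hx
  | zero =>
      intro v hv
      rw [symProd_comm, symProd_zero_right]; exact W.zero_mem
  | add x y hx hy ihx ihy =>
      intro v hv
      rw [symProd_comm, symProd_add_right, symProd_comm v x, symProd_comm v y]
      exact W.add_mem (ihx v hv) (ihy v hv)
  | smul c x hx ih =>
      intro v hv
      rw [symProd_comm, symProd_smul_right, symProd_comm v x]
      exact W.smul_mem c (ih v hv)

end DimAux
section IndepAux

open Matrix
variable {n d : ℕ}

/-- The linear map `M ↦ Bᵀ * M * B` where `B` has rows `e i`. -/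
def matT (e : Fin d → Fin n → ℝ) :
    Matrix (Fin d) (Fin d) ℝ →ₗ[ℝ] Matrix (Fin n) (Fin n) ℝ where
  toFun M := (Matrix.of e)ᵀ * M * Matrix.of e
  map_add' A B := by simp [Matrix.mul_add, Matrix.add_mul]
  map_smul' c A := by simp [Matrix.mul_smul, Matrix.smul_mul]

lemma matT_std (e : Fin d → Fin n → ℝ) (i j : Fin d) :
    matT e (Matrix.single i j 1) = vecMulVec (e i) (e j) := by
  ext a b
  simp only [matT, LinearMap.coe_mk, AddHom.coe_mk, Matrix.mul_apply, vecMulVec_apply,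
    Matrix.transpose_apply, Matrix.of_apply, Matrix.single]
  simp only [ite_and, mul_ite, mul_one, mul_zero, ite_mul, zero_mul,
    Finset.sum_ite_eq, Finset.mem_univ, if_true]

lemma matT_injective {e : Fin d → Fin n → ℝ} (he : LinearIndependent ℝ e) :
    Function.Injective (matT e) := by
  have keyA : ∀ (C : Matrix (Fin d) (Fin n) ℝ), (Matrix.of e)ᵀ * C = 0 → C = 0 := by
    intro C hC
    ext i b
    have hsum : ∑ k, C k b • e k = 0 := by
      funext a
      have := congrFun (congrFun hC a) b
      simpa [Matrix.mul_apply, Finset.sum_apply, mul_comm] using this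
    simpa using Fintype.linearIndependent_iff.1 he (fun k => C k b) hsum i
  have keyB : ∀ (M : Matrix (Fin d) (Fin d) ℝ), M * Matrix.of e = 0 → M = 0 := by
    intro M hM
    ext i j
    have hsum : ∑ k, M i k • e k = 0 := by
      funext b
      have := congrFun (congrFun hM i) b
      simpa [Matrix.mul_apply, Finset.sum_apply] using this
    simpa using Fintype.linearIndependent_iff.1 he (fun k => M i k) hsum j
  intro M N hMN
  have h0 : matT e (M - N) = 0 := by rw [map_sub, hMN, sub_self]
  have : (Matrix.of e)ᵀ * ((M - N) * Matrix.of e) = 0 := by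
    rw [← Matrix.mul_assoc]; exact h0
  have := keyB _ (keyA _ this)
  exact sub_eq_zero.1 this

/-- The symmetric standard basis matrices. -/
def msym (p : {p : Fin d × Fin d // p.1 ≤ p.2}) : Matrix (Fin d) (Fin d) ℝ :=
  Matrix.single p.1.1 p.1.2 1 + Matrix.single p.1.2 p.1.1 1

lemma msym_indep : LinearIndependent ℝ (msym (d := d)) := by
  rw [Fintype.linearIndependent_iff]
  intro c hsum p
  have hentry : ∑ q, c q * msym q p.1.1 p.1.2 = 0 := by
    have := congrFun (congrFun hsum p.1.1) p.1.2
    simpa [Matrix.sum_apply] using this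
  rw [Finset.sum_eq_single p] at hentry
  · by_cases hpp : p.1.1 = p.1.2
    · have : msym p p.1.1 p.1.2 = 2 := by simp [msym, Matrix.single, hpp]; norm_num
      rw [this] at hentry; linarith
    · have : msym p p.1.1 p.1.2 = 1 := by simp [msym, Matrix.single, hpp, Ne.symm hpp]
      rw [this] at hentry; linarith
  · intro q _ hqp
    have h1 : ¬(q.1.1 = p.1.1 ∧ q.1.2 = p.1.2) := by
      rintro ⟨ha, hb⟩; exact hqp (Subtype.ext (Prod.ext ha hb))
    have h2 : ¬(q.1.2 = p.1.1 ∧ q.1.1 = p.1.2) := by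
      rintro ⟨ha, hb⟩
      have heq : q.1.1 = q.1.2 := le_antisymm q.2 (by rw [ha, hb]; exact p.2)
      exact hqp (Subtype.ext (Prod.ext (heq.trans ha) (heq.symm.trans hb)))
    have : msym q p.1.1 p.1.2 = 0 := by
      simp only [msym, Matrix.single, Matrix.add_apply, Matrix.of_apply]
      rw [if_neg h1, if_neg h2, add_zero]
    rw [this, mul_zero]
  · simp

end IndepAux

/-- for a closed cone `K` and a subspace `X` of `ℝⁿ`, `CP(X ∩ K)` is an
exposed face of `CP(K)`; if moreover `K` is convex and `span(X ∩ K)` has dimension `d`,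
then `dim CP(X ∩ K) = d(d+1)/2`. -/

theorem stmt18 (n : ℕ) (K : Set (Fin n → ℝ)) (hKcl : IsClosed K)
    (hKcone : ∀ x ∈ K, ∀ c : ℝ, 0 ≤ c → c • x ∈ K)
    (hK0 : (0 : Fin n → ℝ) ∈ K)
    (X : Submodule ℝ (Fin n → ℝ)) :
    IsExposedFaceOf (CPset K) (CPset ((X : Set (Fin n → ℝ)) ∩ K)) ∧
    ∀ d : ℕ, Convex ℝ K →
      Module.finrank ℝ (Submodule.span ℝ ((X : Set (Fin n → ℝ)) ∩ K)) = d →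
      setDim (CPset ((X : Set (Fin n → ℝ)) ∩ K)) = d * (d + 1) / 2 := by
  classical
  set S : Set (Fin n → ℝ) := (X : Set (Fin n → ℝ)) ∩ K with hSdef
  have hScone : ∀ x ∈ S, ∀ c : ℝ, 0 ≤ c → c • x ∈ S := fun x hx c hc =>
    ⟨X.smul_mem c hx.1, hKcone x hx.2 c hc⟩
  have h0S : (0 : Fin n → ℝ) ∈ S := ⟨X.zero_mem, hK0⟩
  constructor
  · refine ⟨⟨⟨_, mem_CPset_single h0S⟩, ?_, ?_, ?_, ?_⟩,
      Hmat X, fun A hA => mip_Hmat_nonneg X hA, ?_⟩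
    · rintro A ⟨k, hk, f, hf, rfl⟩
      exact ⟨k, hk, f, fun i => (hf i).2, rfl⟩
    · intro x hx y hy a b ha hb hab
      exact CPset_add (CPset_smul hScone ha hx) (CPset_smul hScone hb hy)
    · exact fun x hx c hc => CPset_smul hScone hc hx
    · intro a ha b hb hab
      have h0 : mip (Hmat X) (a + b) = 0 := mip_Hmat_zero_of_mem X hab
      have hadd : mip (Hmat X) (a + b) = mip (Hmat X) a + mip (Hmat X) b :=
        (mipL (Hmat X)).map_add a b
      have h1 := mip_Hmat_nonneg X ha
      have h2 := mip_Hmat_nonneg X hb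
      exact ⟨mem_of_mip_Hmat_zero X ha (by linarith),
        mem_of_mip_Hmat_zero X hb (by linarith)⟩
    · ext A
      constructor
      · intro hA
        refine ⟨?_, mip_Hmat_zero_of_mem X hA⟩
        obtain ⟨k, hk, f, hf, rfl⟩ := hA
        exact ⟨k, hk, f, fun i => (hf i).2, rfl⟩
      · rintro ⟨hA, h0⟩
        exact mem_of_mip_Hmat_zero X hA h0
  · intro d hconv hd
    set V : Submodule ℝ (Fin n → ℝ) := Submodule.span ℝ S with hVdef
    have hdV : Module.finrank ℝ ↥V = d := hd
    have hSadd : ∀ u ∈ S, ∀ v ∈ S, u + v ∈ S := by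
      intro u hu v hv
      refine ⟨X.add_mem hu.1 hv.1, ?_⟩
      have hm : (1/2 : ℝ) • u + (1/2 : ℝ) • v ∈ K :=
        hconv hu.2 hv.2 (by norm_num) (by norm_num) (by norm_num)
      have h2 := hKcone _ hm 2 (by norm_num)
      rwa [smul_add, smul_smul, smul_smul, show (2:ℝ) * (1/2) = 1 by norm_num,
        one_smul, one_smul] at h2
    let bV : Module.Basis (Fin d) ℝ ↥V := (Module.finBasis ℝ ↥V).reindex (finCongr hdV)
    let e : Fin d → (Fin n → ℝ) := fun i => (bV i : Fin n → ℝ)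
    have he_ind : LinearIndependent ℝ e :=
      bV.linearIndependent.map' V.subtype (Submodule.ker_subtype V)
    have he_mem : ∀ i, e i ∈ V := fun i => (bV i).2
    have hspan_e : Submodule.span ℝ (Set.range e) = V := by
      have h1 : Set.range e = V.subtype '' Set.range bV := by
        rw [← Set.range_comp]; rfl
      rw [h1, ← Submodule.map_span, bV.span_eq, Submodule.map_top, Submodule.range_subtype]
    let F : {p : Fin d × Fin d // p.1 ≤ p.2} → Matrix (Fin n) (Fin n) ℝ :=
      fun p => symProd (e p.1.1) (e p.1.2)
    have hF_eq : ∀ p, F p = matT e (msym p) := by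
      intro p
      show symProd (e p.1.1) (e p.1.2) = matT e (msym p)
      rw [msym, map_add, matT_std, matT_std, symProd]
    have hF_ind : LinearIndependent ℝ F := by
      have h2 := msym_indep.map' (matT e) (LinearMap.ker_eq_bot.2 (matT_injective he_ind))
      have hfe : F = (matT e) ∘ msym := funext fun p => hF_eq p
      rwa [hfe]
    have hsub1 : ∀ u ∈ V, ∀ v ∈ V, symProd u v ∈ Submodule.span ℝ (CPset S) := by
      refine symProd_mem_span ?_
      intro u hu v hv
      rw [symProd_eq_sub]
      exact Submodule.sub_mem _ (Submodule.sub_mem _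
        (Submodule.subset_span (mem_CPset_single (hSadd u hu v hv)))
        (Submodule.subset_span (mem_CPset_single hu)))
        (Submodule.subset_span (mem_CPset_single hv))
    have hsub2 : ∀ u ∈ V, ∀ v ∈ V, symProd u v ∈ Submodule.span ℝ (Set.range F) := by
      intro u hu v hv
      refine symProd_mem_span ?_ u (by rwa [hspan_e]) v (by rwa [hspan_e])
      rintro x ⟨i, rfl⟩ y ⟨j, rfl⟩
      rcases le_or_gt i j with h | h
      · exact Submodule.subset_span ⟨⟨(i, j), h⟩, rfl⟩
      · rw [symProd_comm]
        exact Submodule.subset_span ⟨⟨(j, i), h.le⟩, rfl⟩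
    have hspan_eq : Submodule.span ℝ (CPset S) = Submodule.span ℝ (Set.range F) := by
      apply le_antisymm
      · rw [Submodule.span_le]
        rintro A ⟨k, hk, f, hf, rfl⟩
        refine Submodule.sum_mem _ fun i _ => ?_
        have hfi : f i ∈ V := Submodule.subset_span (hf i)
        rw [symProd_self]
        exact Submodule.smul_mem _ _ (hsub2 _ hfi _ hfi)
      · rw [Submodule.span_le]
        rintro A ⟨p, rfl⟩
        exact hsub1 _ (he_mem p.1.1) _ (he_mem p.1.2)
    show Module.finrank ℝ ↥(Submodule.span ℝ (CPset S)) = d * (d + 1) / 2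
    rw [hspan_eq, finrank_span_eq_card hF_ind,
      ← Fintype.card_congr (Sym2.sortEquiv (α := Fin d)), Sym2.card]
    simp [Nat.choose_two_right, Nat.mul_comm]
end
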